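/- Let n, m be natural numbers, let α ≥ 1 be a real number, and let S be a finite subset of (ZMod 2)^n with |S| ≥ 2^(m+α). Then the probability, over a uniformly random pair (A, b) where A is an m×n matrix over ZMod 2 and b ∈ (ZMod 2)^m, that there exists x ∈ S with A·x = b is at least 1 - 2^(-α). -/

import Mathlib

open Finset Filter
open scoped Classical

/-- Probability of event `P` over a uniformly random pair `(A, b)` with `A` an
`m × n` matrix over `ZMod 2` and `b : Fin m → ZMod 2`. -/
noncomputable def xorProb (n m : ℕ)
    (P : Matrix (Fin m) (Fin n) (ZMod 2) × (Fin m → ZMod 2) → Prop) : ℝ :=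
  (Finset.univ.filter P).card /
    Fintype.card (Matrix (Fin m) (Fin n) (ZMod 2) × (Fin m → ZMod 2))

/-- The random 1-CARD-XOR formula `ψ(n,k,m)` is satisfied by the pair `(A, b)`:
there is an assignment of Hamming weight at most `k` solving `A ⬝ x = b`. -/
def cardXorSat (n k m : ℕ)
    (ab : Matrix (Fin m) (Fin n) (ZMod 2) × (Fin m → ZMod 2)) : Prop :=
  ∃ x : Fin n → ZMod 2, hammingNorm x ≤ k ∧ ab.1.mulVec x = ab.2

/-- Probability that `ψ(n,k,m)` is satisfiable. -/
noncomputable def satProb (n k m : ℕ) : ℝ := xorProb n m (cardXorSat n k m)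

/-- Probability that `ψ(n,k,m)` is unsatisfiable. -/
noncomputable def unsatProb (n k m : ℕ) : ℝ := xorProb n m fun ab => ¬ cardXorSat n k m ab

/-- `#F(n,k) = ∑_{w=0}^{k} C(n,w)`, the number of solutions of the at-most-`k`
cardinality constraint on `n` variables. -/
def cardSum (n k : ℕ) : ℕ := ∑ w ∈ Finset.range (k + 1), n.choose w

/-- The binary entropy function (with `H 0 = H 1 = 0` by `logb` junk values). -/
noncomputable def binEnt (μ : ℝ) : ℝ :=
  -μ * Real.logb 2 μ - (1 - μ) * Real.logb 2 (1 - μ)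


section Aux

lemma fiber_card' {G H : Type*} [AddCommGroup G] [AddCommGroup H] [Fintype G] [Fintype H]
    [DecidableEq H] (f : G →+ H) (hs : Function.Surjective f) (h : H) :
    (Finset.univ.filter (fun g => f g = h)).card * Fintype.card H = Fintype.card G := by
  have key : ∀ h' : H, (Finset.univ.filter (fun g => f g = h')).card
      = (Finset.univ.filter (fun g => f g = h)).card := by
    intro h'
    obtain ⟨g0, hg0⟩ := hs (h' - h)
    apply Finset.card_bij' (fun g _ => g - g0) (fun g _ => g + g0)
    · intro g hg; simp only [mem_filter, mem_univ, true_and] at hg ⊢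
      rw [map_sub, hg, hg0]; abel
    · intro g hg; simp only [mem_filter, mem_univ, true_and] at hg ⊢
      rw [map_add, hg, hg0]; abel
    · intro g _; simp
    · intro g _; simp
  have total : ∑ h' : H, (Finset.univ.filter (fun g => f g = h')).card = Fintype.card G := by
    rw [← Finset.card_univ (α := G),
      Finset.card_eq_sum_card_fiberwise (f := f) (t := Finset.univ) (fun a _ => Finset.mem_univ _)]
  calc (Finset.univ.filter (fun g => f g = h)).card * Fintype.card H
      = ∑ _h' : H, (Finset.univ.filter (fun g => f g = h)).card := by
        rw [Finset.sum_const, Finset.card_univ, smul_eq_mul, mul_comm]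
    _ = ∑ h' : H, (Finset.univ.filter (fun g => f g = h')).card :=
        Finset.sum_congr rfl (fun h' _ => (key h').symm)
    _ = Fintype.card G := total

lemma addeq (m : ℕ) (u v : Fin m → ZMod 2) : u + v = 0 ↔ u = v := by
  constructor
  · intro h; funext i
    have h2 := congrFun h i
    rw [Pi.add_apply, Pi.zero_apply] at h2
    revert h2; generalize u i = a; generalize v i = b; revert a b; decide
  · rintro rfl; funext i
    rw [Pi.add_apply, Pi.zero_apply]; generalize u i = a; revert a; decide

lemma cardOmega (n m : ℕ) :
    Fintype.card (Matrix (Fin m) (Fin n) (ZMod 2) × (Fin m → ZMod 2)) = 2^(m*n) * 2^m := by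
  rw [Fintype.card_prod]
  show Fintype.card (Fin m → Fin n → ZMod 2) * _ = _
  simp [Fintype.card_prod, Matrix, Fintype.card_fun, ZMod.card, ← pow_mul, mul_comm]

lemma cardH (m : ℕ) : Fintype.card (Fin m → ZMod 2) = 2^m := by
  simp [Fintype.card_fun, ZMod.card]

noncomputable def hom1 (n m : ℕ) (x : Fin n → ZMod 2) :
    (Matrix (Fin m) (Fin n) (ZMod 2) × (Fin m → ZMod 2)) →+ (Fin m → ZMod 2) where
  toFun ab := ab.1.mulVec x + ab.2
  map_zero' := by simp [Matrix.zero_mulVec]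
  map_add' ab ab' := by simp [Matrix.add_mulVec]; abel

lemma hom1_surj (n m : ℕ) (x : Fin n → ZMod 2) : Function.Surjective (hom1 n m x) :=
  fun u => ⟨(0, u), by simp [hom1, Matrix.zero_mulVec]⟩

noncomputable def hom2 (n m : ℕ) (x y : Fin n → ZMod 2) :
    (Matrix (Fin m) (Fin n) (ZMod 2) × (Fin m → ZMod 2)) →+
      (Fin m → ZMod 2) × (Fin m → ZMod 2) where
  toFun ab := (ab.1.mulVec x + ab.2, ab.1.mulVec y + ab.2)
  map_zero' := by simp [Matrix.zero_mulVec]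
  map_add' ab ab' := by
    ext r <;> simp [Matrix.add_mulVec] <;> abel

lemma hom2_surj (n m : ℕ) (x y : Fin n → ZMod 2) (hxy : x ≠ y) :
    Function.Surjective (hom2 n m x y) := by
  obtain ⟨i0, hi0⟩ := Function.ne_iff.mp hxy
  rintro ⟨u, w⟩
  set A : Matrix (Fin m) (Fin n) (ZMod 2) :=
    Matrix.of (fun r c => if c = i0 then u r + w r else 0) with hA
  have hAv : ∀ (v : Fin n → ZMod 2) (r : Fin m), A.mulVec v r = (u r + w r) * v i0 := by
    intro v r
    simp [hA, Matrix.mulVec, dotProduct, ite_mul]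
  refine ⟨(A, A.mulVec x + u), ?_⟩
  have h1 : A.mulVec x + (A.mulVec x + u) = u := by
    funext r
    simp only [Pi.add_apply, hAv]
    generalize (u r + w r) * x i0 = p; generalize u r = q
    revert p q; decide
  have h2 : A.mulVec y + (A.mulVec x + u) = w := by
    funext r
    simp only [Pi.add_apply, hAv]
    revert hi0
    generalize x i0 = p; generalize y i0 = q
    generalize u r = a; generalize w r = b
    revert p q a b; decide
  show (_, _) = (u, w)
  rw [Prod.mk.injEq]
  exact ⟨h1, h2⟩

lemma count1 (n m : ℕ) (x : Fin n → ZMod 2) :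
    (Finset.univ.filter
      (fun ab : Matrix (Fin m) (Fin n) (ZMod 2) × (Fin m → ZMod 2) =>
        ab.1.mulVec x = ab.2)).card = 2^(m*n) := by
  have h := fiber_card' (hom1 n m x) (hom1_surj n m x) 0
  rw [cardH, cardOmega] at h
  have he : (Finset.univ.filter
      (fun ab : Matrix (Fin m) (Fin n) (ZMod 2) × (Fin m → ZMod 2) => hom1 n m x ab = 0))
      = (Finset.univ.filter (fun ab => ab.1.mulVec x = ab.2)) := by
    apply Finset.filter_congr
    intro ab _
    show ab.1.mulVec x + ab.2 = 0 ↔ _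
    exact addeq m _ _
  rw [he] at h
  exact Nat.eq_of_mul_eq_mul_right (by positivity) h

lemma count2 (n m : ℕ) (hn : 1 ≤ n) (x y : Fin n → ZMod 2) (hxy : x ≠ y) :
    (Finset.univ.filter
      (fun ab : Matrix (Fin m) (Fin n) (ZMod 2) × (Fin m → ZMod 2) =>
        ab.1.mulVec x = ab.2 ∧ ab.1.mulVec y = ab.2)).card = 2^(m*(n-1)) := by
  have h := fiber_card' (hom2 n m x y) (hom2_surj n m x y hxy) 0
  rw [Fintype.card_prod, cardH, cardOmega] at h
  have he : (Finset.univ.filter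
      (fun ab : Matrix (Fin m) (Fin n) (ZMod 2) × (Fin m → ZMod 2) => hom2 n m x y ab = 0))
      = (Finset.univ.filter (fun ab => ab.1.mulVec x = ab.2 ∧ ab.1.mulVec y = ab.2)) := by
    apply Finset.filter_congr
    intro ab _
    show (ab.1.mulVec x + ab.2, ab.1.mulVec y + ab.2) = (0 : (Fin m → ZMod 2) × (Fin m → ZMod 2)) ↔ _
    rw [Prod.ext_iff]
    exact and_congr (addeq m _ _) (addeq m _ _)
  rw [he] at h
  obtain ⟨n', rfl⟩ : ∃ n', n = n' + 1 := ⟨n - 1, (Nat.succ_pred_eq_of_pos hn).symm⟩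
  have hexp : m * (n' + 1) = m * ((n' + 1) - 1) + m := by
    rw [Nat.add_sub_cancel, Nat.mul_add, Nat.mul_one]
  rw [hexp, pow_add] at h
  have h' : _ = 2 ^ (m * (n' + 1 - 1)) * (2 ^ m * 2 ^ m) := h.trans (by ring)
  exact Nat.eq_of_mul_eq_mul_right (by positivity) h'

end Aux

set_option maxHeartbeats 1000000 in
theorem stmt0 (n m : ℕ) (α : ℝ) (hα : 1 ≤ α) (S : Finset (Fin n → ZMod 2))
    (hS : (2 : ℝ) ^ ((m : ℝ) + α) ≤ S.card) :
    1 - (2 : ℝ) ^ (-α) ≤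
      xorProb n m (fun ab => ∃ x ∈ S, ab.1.mulVec x = ab.2) := by
  -- basic quantities
  set N : ℝ := (S.card : ℝ) with hNdef
  have hN2 : (2 : ℝ) ≤ N := by
    have h2a : (2:ℝ)^(1:ℝ) ≤ (2:ℝ)^((m:ℝ)+α) := by
      apply Real.rpow_le_rpow_of_exponent_le one_le_two
      have : (0:ℝ) ≤ (m:ℝ) := Nat.cast_nonneg m
      linarith
    rw [Real.rpow_one] at h2a
    exact h2a.trans hS
  have hn : 1 ≤ n := by
    by_contra h
    push_neg at h
    have hcard : S.card ≤ 2^n := by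
      simpa [Fintype.card_fun, ZMod.card] using Finset.card_le_univ S
    have hn0 : n = 0 := by omega
    have hone : (2:ℕ)^n = 1 := by rw [hn0, pow_zero]
    have hle : S.card ≤ 1 := by omega
    have : N ≤ 1 := by rw [hNdef]; exact_mod_cast hle
    linarith
  set q : ℝ := (2:ℝ)^(m*n) with hqdef
  set M : ℝ := (2:ℝ)^m with hMdef
  set c : ℝ := (2:ℝ)^(m*(n-1)) with hcdef
  have he : m*(n-1) + m = m*n := by
    cases n with
    | zero => omega
    | succ n' => rw [Nat.add_sub_cancel]; ring
  have hcM : c * M = q := by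
    rw [hcdef, hMdef, hqdef, ← pow_add, he]
  have hMpos : (0:ℝ) < M := by positivity
  have hqpos : (0:ℝ) < q := by positivity
  have hcpos : (0:ℝ) < c := by positivity
  have hM1 : (1:ℝ) ≤ M := by
    rw [hMdef]; exact_mod_cast Nat.one_le_two_pow
  set a : ℝ := (2:ℝ)^α with hadef
  have ha2 : (2:ℝ) ≤ a := by
    rw [hadef]
    calc (2:ℝ) = (2:ℝ)^(1:ℝ) := (Real.rpow_one 2).symm
    _ ≤ (2:ℝ)^α := Real.rpow_le_rpow_of_exponent_le one_le_two hα
  have hapos : (0:ℝ) < a := by linarith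
  have hNa : M * a ≤ N := by
    have : (2:ℝ)^((m:ℝ)+α) = M * a := by
      rw [Real.rpow_add two_pos, hMdef, hadef, Real.rpow_natCast]
    rw [← this]; exact hS
  have hneg : (2:ℝ)^(-α) = a⁻¹ := by
    rw [hadef, Real.rpow_neg (by norm_num : (0:ℝ) ≤ 2)]
  -- rewrite the goal
  rw [xorProb, cardOmega n m, hneg]
  set T := Finset.univ.filter
    (fun ab : Matrix (Fin m) (Fin n) (ZMod 2) × (Fin m → ZMod 2) =>
      ∃ x ∈ S, ab.1.mulVec x = ab.2) with hT
  set t : ℝ := (T.card : ℝ) with htdef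
  have hden : ((2^(m*n) * 2^m : ℕ) : ℝ) = q * M := by
    push_cast; rw [hqdef, hMdef]
  rw [hden, le_div_iff₀ (by positivity)]
  -- the counting function
  set F : Matrix (Fin m) (Fin n) (ZMod 2) × (Fin m → ZMod 2) → ℝ :=
    fun ab => ((S.filter fun x => ab.1.mulVec x = ab.2).card : ℝ) with hFdef
  have hFsum : ∀ ab, F ab = ∑ x ∈ S, (if ab.1.mulVec x = ab.2 then (1:ℝ) else 0) := by
    intro ab
    show ((S.filter fun x => ab.1.mulVec x = ab.2).card : ℝ) = _
    rw [Finset.card_filter]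
    push_cast
    rfl
  have hsum : ∑ ab : Matrix (Fin m) (Fin n) (ZMod 2) × (Fin m → ZMod 2), F ab = N * q := by
    calc ∑ ab : Matrix (Fin m) (Fin n) (ZMod 2) × (Fin m → ZMod 2), F ab
        = ∑ ab : Matrix (Fin m) (Fin n) (ZMod 2) × (Fin m → ZMod 2), ∑ x ∈ S, (if ab.1.mulVec x = ab.2 then (1:ℝ) else 0) :=
          Finset.sum_congr rfl (fun ab _ => hFsum ab)
      _ = ∑ x ∈ S, ∑ ab : Matrix (Fin m) (Fin n) (ZMod 2) × (Fin m → ZMod 2), (if ab.1.mulVec x = ab.2 then (1:ℝ) else 0) := by rw [Finset.sum_comm]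
      _ = ∑ _x ∈ S, q := by
          refine Finset.sum_congr rfl fun x _ => ?_
          rw [Finset.sum_boole, count1]
          push_cast
          rw [hqdef]
      _ = N * q := by rw [Finset.sum_const, nsmul_eq_mul, hNdef]
  have hsq : ∑ ab : Matrix (Fin m) (Fin n) (ZMod 2) × (Fin m → ZMod 2), (F ab)^2 = N * (N * c + (q - c)) := by
    calc ∑ ab : Matrix (Fin m) (Fin n) (ZMod 2) × (Fin m → ZMod 2), (F ab)^2
        = ∑ ab : Matrix (Fin m) (Fin n) (ZMod 2) × (Fin m → ZMod 2), ∑ x ∈ S, ∑ y ∈ S,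
            (if ab.1.mulVec x = ab.2 ∧ ab.1.mulVec y = ab.2 then (1:ℝ) else 0) := by
          refine Finset.sum_congr rfl fun ab _ => ?_
          rw [sq, hFsum ab, Finset.sum_mul_sum]
          refine Finset.sum_congr rfl fun x _ => Finset.sum_congr rfl fun y _ => ?_
          by_cases h1 : ab.1.mulVec x = ab.2 <;> by_cases h2 : ab.1.mulVec y = ab.2 <;>
            simp [h1, h2]
      _ = ∑ x ∈ S, ∑ y ∈ S, ∑ ab : Matrix (Fin m) (Fin n) (ZMod 2) × (Fin m → ZMod 2),
            (if ab.1.mulVec x = ab.2 ∧ ab.1.mulVec y = ab.2 then (1:ℝ) else 0) := by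
          rw [Finset.sum_comm]
          exact Finset.sum_congr rfl fun x _ => by rw [Finset.sum_comm]
      _ = ∑ x ∈ S, ∑ y ∈ S, (if x = y then q else c) := by
          refine Finset.sum_congr rfl fun x hx => Finset.sum_congr rfl fun y hy => ?_
          rw [Finset.sum_boole]
          by_cases hxy : x = y
          · subst hxy
            rw [if_pos rfl]
            have heq : (Finset.univ.filter
                (fun ab : Matrix (Fin m) (Fin n) (ZMod 2) × (Fin m → ZMod 2) =>
                  ab.1.mulVec x = ab.2 ∧ ab.1.mulVec x = ab.2))
                = (Finset.univ.filter (fun ab => ab.1.mulVec x = ab.2)) := by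
              apply Finset.filter_congr
              intro ab _
              exact and_self_iff
            rw [heq, count1]
            push_cast
            rw [hqdef]
          · rw [if_neg hxy, count2 n m hn x y hxy]
            push_cast
            rw [hcdef]
      _ = ∑ _x ∈ S, (N * c + (q - c)) := by
          refine Finset.sum_congr rfl fun x hx => ?_
          have hsplit : ∀ y, (if x = y then q else c) = c + (if x = y then q - c else 0) := by
            intro y; split_ifs <;> ring
          rw [Finset.sum_congr rfl fun y _ => hsplit y, Finset.sum_add_distrib,
            Finset.sum_const, Finset.sum_ite_eq S x (fun _ => q - c), if_pos hx,
            nsmul_eq_mul, hNdef]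
      _ = N * (N * c + (q - c)) := by rw [Finset.sum_const, nsmul_eq_mul, hNdef]
  -- F vanishes off T
  have hsupp : ∀ ab ∈ Finset.univ, ab ∉ T → F ab = 0 := by
    intro ab _ hab
    rw [hT, Finset.mem_filter] at hab
    push_neg at hab
    have hab' := hab (Finset.mem_univ ab)
    have hempty : S.filter (fun x => ab.1.mulVec x = ab.2) = ∅ :=
      Finset.filter_eq_empty_iff.mpr (fun {x} hx hP => hab' x hx hP)
    rw [hFdef]
    simp [hempty]
  have hT1 : ∑ ab ∈ T, F ab = N * q := by
    rw [Finset.sum_subset (Finset.subset_univ T) hsupp]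
    exact hsum
  have hT2 : ∑ ab ∈ T, (F ab)^2 ≤ N * (N * c + (q - c)) := by
    rw [← hsq]
    exact Finset.sum_le_sum_of_subset_of_nonneg (Finset.subset_univ T)
      (fun ab _ _ => sq_nonneg _)
  -- Cauchy-Schwarz
  have hCS : (N * q)^2 ≤ (N * (N * c + (q - c))) * t := by
    have h := Finset.sum_mul_sq_le_sq_mul_sq T F (fun _ => (1:ℝ))
    simp only [mul_one, one_pow] at h
    rw [hT1] at h
    have hTone : ∑ _ab ∈ T, (1:ℝ) = t := by
      rw [Finset.sum_const, nsmul_eq_mul, mul_one, htdef]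
    rw [hTone] at h
    calc (N * q)^2 ≤ (∑ ab ∈ T, (F ab)^2) * t := h
      _ ≤ (N * (N * c + (q - c))) * t := by
          apply mul_le_mul_of_nonneg_right hT2
          rw [htdef]; positivity
  -- final arithmetic
  have htpos : (0:ℝ) ≤ t := by rw [htdef]; positivity
  have hNqpos : (0:ℝ) < N * q := by positivity
  have e1 : (N * (N * c + (q - c))) * M = (N * q) * (N + M - 1) := by
    linear_combination (N^2 - N) * hcM
  have k1 : (N * q) * M ≤ t * (N + M - 1) := by
    have h2 : (N * q)^2 * M ≤ ((N * (N * c + (q - c))) * t) * M :=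
      mul_le_mul_of_nonneg_right hCS hMpos.le
    have h3 : (N * q) * ((N * q) * M) ≤ (N * q) * (t * (N + M - 1)) := by
      calc (N * q) * ((N * q) * M) = (N * q)^2 * M := by ring
        _ ≤ ((N * (N * c + (q - c))) * t) * M := h2
        _ = ((N * (N * c + (q - c))) * M) * t := by ring
        _ = ((N * q) * (N + M - 1)) * t := by rw [e1]
        _ = (N * q) * (t * (N + M - 1)) := by ring
    exact le_of_mul_le_mul_left h3 hNqpos
  set b : ℝ := a⁻¹ with hbdef
  have hab1 : a * b = 1 := mul_inv_cancel₀ (ne_of_gt hapos)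
  have hbpos : (0:ℝ) < b := by rw [hbdef]; positivity
  have k2 : M ≤ b * N := by
    have h4 : b * (M * a) ≤ b * N := mul_le_mul_of_nonneg_left hNa hbpos.le
    calc M = b * (M * a) := by rw [mul_comm M a, ← mul_assoc, mul_comm b a, hab1, one_mul]
      _ ≤ b * N := h4
  have k3 : (1 - b) * (N + M - 1) ≤ N := by
    nlinarith [mul_nonneg hbpos.le (by linarith : (0:ℝ) ≤ M - 1)]
  have hDpos : (0:ℝ) < N + M - 1 := by linarith
  have final : (1 - b) * (q * M) * (N + M - 1) ≤ t * (N + M - 1) := by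
    calc (1 - b) * (q * M) * (N + M - 1) = ((1 - b) * (N + M - 1)) * (q * M) := by ring
      _ ≤ N * (q * M) := mul_le_mul_of_nonneg_right k3 (by positivity)
      _ = (N * q) * M := by ring
      _ ≤ t * (N + M - 1) := k1
  have hfin := le_of_mul_le_mul_right final hDpos
  convert hfin using 4
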